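/- Let R be a ring and M a right R-module that is semisimple and endoartinian. Then M satisfies the dual Schröder–Bernstein property: for any two direct summands A and B of M such that there exist a surjective R-module homomorphism A → B and a surjective R-module homomorphism B → A, the modules A and B are isomorphic as R-modules. -/

import Mathlib

/-- A module `M` over a ring `S` is *endoartinian* if every descending chain of images of
module endomorphisms of `M` stabilizes.  (A right `R`-module is treated as a module over
`Rᵐᵒᵖ`.) -/
def IsEndoartinian (S M : Type*) [Ring S] [AddCommGroup M] [Module S M] : Prop :=
  ∀ f : ℕ → M →ₗ[S] M,
    (∀ n, LinearMap.range (f (n + 1)) ≤ LinearMap.range (f n)) →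
    ∃ n, ∀ k, n ≤ k → LinearMap.range (f k) = LinearMap.range (f n)

/-- A surjection from a semisimple module admits an injective linear right inverse. -/
lemma exists_injective_rightInverse {S A B : Type*} [Ring S] [AddCommGroup A] [Module S A]
    [AddCommGroup B] [Module S B] [IsSemisimpleModule S A]
    (f : A →ₗ[S] B) (hf : Function.Surjective f) :
    ∃ i : B →ₗ[S] A, Function.Injective i ∧ ∀ b, f (i b) = b := by
  obtain ⟨C, hC⟩ := exists_isCompl (LinearMap.ker f)
  have hinj : Function.Injective (f.comp C.subtype) := by
    intro x y h
    have hx' : ((x - y : C) : A) ∈ LinearMap.ker f ⊓ C := by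
      refine ⟨?_, (x - y : C).2⟩
      have : f (C.subtype x) = f (C.subtype y) := h
      have h2 : f ((x : A) - (y : A)) = 0 := by
        rw [map_sub]; exact sub_eq_zero.mpr this
      simpa using h2
    rw [hC.inf_eq_bot] at hx'
    have : (x - y : C) = 0 := Subtype.ext (by simpa using hx')
    exact sub_eq_zero.mp this
  have hsurj : Function.Surjective (f.comp C.subtype) := by
    intro b
    obtain ⟨a, ha⟩ := hf b
    have : a ∈ LinearMap.ker f ⊔ C := by rw [hC.sup_eq_top]; trivial
    obtain ⟨k, hk, c, hc, hkc⟩ := Submodule.mem_sup.mp this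
    refine ⟨⟨c, hc⟩, ?_⟩
    have : f a = f k + f c := by rw [← hkc, map_add]
    simp only [LinearMap.mem_ker] at hk
    simp [LinearMap.comp_apply, ← ha, this, hk]
  let e := LinearEquiv.ofBijective (f.comp C.subtype) ⟨hinj, hsurj⟩
  refine ⟨C.subtype.comp (e.symm : B →ₗ[S] C), ?_, ?_⟩
  · exact C.injective_subtype.comp e.symm.injective
  · intro b
    exact e.apply_symm_apply b

/-- A semisimple endoartinian module satisfies the dual Schröder–Bernstein property:
mutually epimorphic direct summands are isomorphic. -/
theorem semisimple_isEndoartinian_DSB_property (R M : Type*) [Ring R] [AddCommGroup M]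
    [Module Rᵐᵒᵖ M] (hss : IsSemisimpleModule Rᵐᵒᵖ M) (hM : IsEndoartinian Rᵐᵒᵖ M)
    (A B : Submodule Rᵐᵒᵖ M)
    (hA : ∃ L : Submodule Rᵐᵒᵖ M, A ⊓ L = ⊥ ∧ A ⊔ L = ⊤)
    (hB : ∃ L : Submodule Rᵐᵒᵖ M, B ⊓ L = ⊥ ∧ B ⊔ L = ⊤)
    (f : A →ₗ[Rᵐᵒᵖ] B) (hf : Function.Surjective f)
    (g : B →ₗ[Rᵐᵒᵖ] A) (hg : Function.Surjective g) :
    Nonempty (A ≃ₗ[Rᵐᵒᵖ] B) := by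
  haveI := hss
  haveI : IsSemisimpleModule Rᵐᵒᵖ A := IsSemisimpleModule.submodule Rᵐᵒᵖ M
  haveI : IsSemisimpleModule Rᵐᵒᵖ B := IsSemisimpleModule.submodule Rᵐᵒᵖ M
  obtain ⟨i, hi_inj, hi⟩ := exists_injective_rightInverse f hf
  obtain ⟨j, hj_inj, hj⟩ := exists_injective_rightInverse g hg
  -- i : B →ₗ A, j : A →ₗ B, both injective
  obtain ⟨L, hL1, hL2⟩ := hA
  have hcompl : IsCompl A L := ⟨disjoint_iff.mpr hL1, codisjoint_iff.mpr hL2⟩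
  set π : M →ₗ[Rᵐᵒᵖ] A := Submodule.linearProjOfIsCompl A L hcompl with hπ
  set t : A →ₗ[Rᵐᵒᵖ] A := i.comp j with ht
  have ht_inj : Function.Injective t := hi_inj.comp hj_inj
  have htn_inj : ∀ n, Function.Injective (t ^ n : A →ₗ[Rᵐᵒᵖ] A) := by
    intro n
    induction n with
    | zero => simpa [pow_zero, Module.End.one_eq_id] using Function.injective_id
    | succ n ih =>
      rw [pow_succ, Module.End.mul_eq_comp, LinearMap.coe_comp]
      exact ih.comp ht_inj
  -- the chain of endomorphisms of M
  set F : ℕ → M →ₗ[Rᵐᵒᵖ] M := fun n => A.subtype.comp ((t ^ n : A →ₗ[Rᵐᵒᵖ] A).comp π) with hF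
  have hrange : ∀ n, LinearMap.range (F n)
      = Submodule.map A.subtype (LinearMap.range (t ^ n : A →ₗ[Rᵐᵒᵖ] A)) := by
    intro n
    rw [hF]
    simp only [LinearMap.range_comp, hπ, Submodule.linearProjOfIsCompl, Submodule.range_projectionOnto, Submodule.map_top]
  have hdesc : ∀ n, LinearMap.range (F (n + 1)) ≤ LinearMap.range (F n) := by
    intro n
    rw [hrange, hrange]
    apply Submodule.map_mono
    rintro x ⟨y, rfl⟩
    exact ⟨t y, by rw [pow_succ, Module.End.mul_eq_comp]; rfl⟩
  obtain ⟨n, hn⟩ := hM F hdesc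
  have heq : LinearMap.range (t ^ (n + 1) : A →ₗ[Rᵐᵒᵖ] A)
      = LinearMap.range (t ^ n : A →ₗ[Rᵐᵒᵖ] A) := by
    have h1 := hn (n + 1) (Nat.le_succ n)
    rw [hrange, hrange] at h1
    exact Submodule.map_injective_of_injective A.injective_subtype h1
  have ht_surj : Function.Surjective t := by
    intro a
    have : (t ^ n : A →ₗ[Rᵐᵒᵖ] A) a ∈ LinearMap.range (t ^ (n + 1) : A →ₗ[Rᵐᵒᵖ] A) := by
      rw [heq]; exact ⟨a, rfl⟩
    obtain ⟨b, hb⟩ := this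
    refine ⟨b, htn_inj n ?_⟩
    rw [← hb, pow_succ, Module.End.mul_eq_comp]
    rfl
  have hi_surj : Function.Surjective i := fun a => by
    obtain ⟨b, hb⟩ := ht_surj a
    exact ⟨j b, hb⟩
  exact ⟨(LinearEquiv.ofBijective i ⟨hi_inj, hi_surj⟩).symm⟩
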